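/- There exists a constant C > 0 such that for every sufficiently large integer R, there exist a function u : ℤ² → ℝ and a potential V : ℤ² → ℝ with the following properties: (i) u ∈ ℓ²(ℤ²); (ii) Δ_d u_j + V_j u_j = 0 for all j ∈ ℤ²; (iii) sup_{j∈ℤ²} |V_j| ≤ C (with C independent of R); (iv) u(0,0) = 1; and (v) u(j₁, j₂) = 0 whenever |j₁| + |j₂ − R| ≤ 2. In particular, a nonzero ℓ² solution of a discrete Schrödinger equation with bounded potential can vanish identically on a ball of fixed radius centered at a point at distance R from the origin. -/

import Mathlib

/-- Discrete Laplacian on `ℤ²`. -/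
def discreteLap2 (u : ℤ × ℤ → ℝ) (j : ℤ × ℤ) : ℝ :=
  u (j.1 + 1, j.2) + u (j.1 - 1, j.2) + u (j.1, j.2 + 1) + u (j.1, j.2 - 1) - 4 * u j

/-! ### Auxiliary machinery for the construction -/

noncomputable def zp (n : ℤ) : ℝ := (2:ℝ) ^ n

lemma zp_pos (n : ℤ) : 0 < zp n := zpow_pos (by norm_num) n

lemma zp_nonneg (n : ℤ) : 0 ≤ zp n := (zp_pos n).le

lemma zp_mono {a b : ℤ} (h : a ≤ b) : zp a ≤ zp b := zpow_le_zpow_right₀ (by norm_num) h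

lemma zp_ratio (a b : ℤ) (k : ℕ) (h : a ≤ b + k) : zp a ≤ (2:ℝ)^k * zp b := by
  calc zp a ≤ zp (b + k) := zp_mono h
  _ = (2:ℝ)^k * zp b := by rw [zp, zp, zpow_add₀ (two_ne_zero), zpow_natCast, mul_comm]

lemma zp_le2 {a b : ℤ} (h : a ≤ b + 1) : zp a ≤ 2 * zp b := by
  have := zp_ratio a b 1 (by omega); norm_num at this; exact this

lemma zp_le4 {a b : ℤ} (h : a ≤ b + 2) : zp a ≤ 4 * zp b := by
  have := zp_ratio a b 2 (by omega); norm_num at this; exact this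

lemma zp_le64 {a b : ℤ} (h : a ≤ b + 6) : zp a ≤ 64 * zp b := by
  have := zp_ratio a b 6 (by omega); norm_num at this; exact this

lemma zp_sq (a : ℤ) : zp a ^ 2 = zp (2*a) := by
  rw [zp, zp, ← zpow_natCast ((2:ℝ)^a) 2, ← zpow_mul]; norm_num [mul_comm]

lemma sumzp : Summable (fun n : ℤ => zp (2 * -|n|)) := by
  have h : ∀ m : ℤ, 0 ≤ m → Summable (fun n : ℕ => zp (-2*n - m)) := by
    intro m hm
    have h0 : Summable (fun n : ℕ => ((1:ℝ)/4)^n * zp (-m)) :=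
      (summable_geometric_of_lt_one (by norm_num) (by norm_num)).mul_right _
    refine h0.congr fun n => ?_
    rw [zp, zp, show (-2*(n:ℤ) - m) = (-2)*n + (-m) by ring,
      zpow_add₀ (two_ne_zero), zpow_mul,
      show ((2:ℝ)^(-2:ℤ)) = 1/4 by norm_num, zpow_natCast]
  refine Summable.of_nat_of_neg_add_one ?_ ?_
  · refine (h 0 le_rfl).congr fun n => ?_
    rw [abs_of_nonneg (by positivity : (0:ℤ) ≤ (n:ℤ))]; ring_nf
  · refine (h 2 (by norm_num)).congr fun n => ?_
    rw [show |(-((n:ℤ) + 1))| = (n:ℤ) + 1 by rw [abs_neg, abs_of_nonneg (by omega)]]; ring_nf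

/-- The 1D profile in the variable `s = j₁ + j₂`, with zeros at `R-2, R, R+2`. -/
noncomputable def gg (R s : ℤ) : ℝ :=
  if s ≤ R - 3 then zp (-|s|)
  else if s = R - 2 then 0
  else if s = R - 1 then -zp (-(R-3))
  else if s = R then 0
  else if s = R + 1 then zp (-(R-3))
  else if s = R + 2 then 0
  else -zp (-(s-6))

/-- The 1D profile in the variable `t = j₁ - j₂`, with zeros at `-R+1, -R-1`. -/
noncomputable def hh (R t : ℤ) : ℝ :=
  if -R + 2 ≤ t then zp (-|t|)
  else if t = -R + 1 then 0
  else if t = -R then -zp (-(R-2))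
  else if t = -R - 1 then 0
  else zp (t + 4)

lemma gg_left {R s : ℤ} (h : s ≤ R - 3) : gg R s = zp (-|s|) := by
  unfold gg; rw [if_pos h]

lemma gg_m2 {R : ℤ} : gg R (R-2) = 0 := by
  unfold gg; rw [if_neg (by omega), if_pos rfl]

lemma gg_m1 {R : ℤ} : gg R (R-1) = -zp (-(R-3)) := by
  unfold gg; rw [if_neg (by omega), if_neg (by omega), if_pos rfl]

lemma gg_R {R : ℤ} : gg R R = 0 := by
  unfold gg; rw [if_neg (by omega), if_neg (by omega), if_neg (by omega), if_pos rfl]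

lemma gg_p1 {R : ℤ} : gg R (R+1) = zp (-(R-3)) := by
  unfold gg
  rw [if_neg (by omega), if_neg (by omega), if_neg (by omega), if_neg (by omega), if_pos rfl]

lemma gg_p2 {R : ℤ} : gg R (R+2) = 0 := by
  unfold gg
  rw [if_neg (by omega), if_neg (by omega), if_neg (by omega), if_neg (by omega),
    if_neg (by omega), if_pos rfl]

lemma gg_right {R s : ℤ} (h : R + 3 ≤ s) : gg R s = -zp (-(s-6)) := by
  unfold gg
  rw [if_neg (by omega), if_neg (by omega), if_neg (by omega), if_neg (by omega),
    if_neg (by omega), if_neg (by omega)]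

lemma hh_right {R t : ℤ} (h : -R + 2 ≤ t) : hh R t = zp (-|t|) := by
  unfold hh; rw [if_pos h]

lemma hh_p1 {R : ℤ} : hh R (-R+1) = 0 := by
  unfold hh; rw [if_neg (by omega), if_pos rfl]

lemma hh_0 {R : ℤ} : hh R (-R) = -zp (-(R-2)) := by
  unfold hh; rw [if_neg (by omega), if_neg (by omega), if_pos rfl]

lemma hh_m1 {R : ℤ} : hh R (-R-1) = 0 := by
  unfold hh; rw [if_neg (by omega), if_neg (by omega), if_neg (by omega), if_pos rfl]

lemma hh_left {R t : ℤ} (h : t ≤ -R - 2) : hh R t = zp (t + 4) := by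
  unfold hh
  rw [if_neg (by omega), if_neg (by omega), if_neg (by omega), if_neg (by omega)]

noncomputable def GG (R s : ℤ) : ℝ := gg R (s+1) + gg R (s-1)
noncomputable def HH (R t : ℤ) : ℝ := hh R (t+1) + hh R (t-1)

lemma gg_sum {R : ℤ} (hR : 5 ≤ R) (s : ℤ) : |GG R s| ≤ 4 * |gg R s| := by
  unfold GG
  have hcase : s ≤ R - 4 ∨ s = R-3 ∨ s = R-2 ∨ s = R-1 ∨ s = R ∨ s = R+1 ∨ s = R+2 ∨
      s = R+3 ∨ R+4 ≤ s := by omega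
  rcases hcase with h|h|h|h|h|h|h|h|h
  · rw [gg_left (by omega : s+1 ≤ R-3), gg_left (by omega : s-1 ≤ R-3), gg_left (by omega)]
    have h1 : zp (-|s+1|) ≤ 2 * zp (-|s|) := zp_le2 (by simp only [Int.abs_eq_natAbs]; omega)
    have h2 : zp (-|s-1|) ≤ 2 * zp (-|s|) := zp_le2 (by simp only [Int.abs_eq_natAbs]; omega)
    rw [abs_of_nonneg (add_nonneg (zp_nonneg _) (zp_nonneg _)), abs_of_nonneg (zp_nonneg _)]
    linarith
  · subst h
    rw [show R-3+1 = R-2 by ring, show R-3-1 = R-4 by ring, gg_m2,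
      gg_left (by omega), gg_left (by omega), zero_add,
      abs_of_nonneg (zp_nonneg _), abs_of_nonneg (zp_nonneg _)]
    exact zp_le4 (by simp only [Int.abs_eq_natAbs]; omega)
  · subst h
    rw [show R-2+1 = R-1 by ring, show R-2-1 = R-3 by ring, gg_m1, gg_left le_rfl, gg_m2,
      show |R-3| = R-3 from abs_of_nonneg (by omega)]
    simp
  · subst h
    rw [show R-1+1 = R by ring, show R-1-1 = R-2 by ring, gg_R, gg_m2]
    simp
  · rw [h, gg_p1, gg_m1]
    simp
  · subst h
    rw [show R+1+1 = R+2 by ring, show R+1-1 = R by ring, gg_p2, gg_R]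
    simp
  · subst h
    rw [show R+2+1 = R+3 by ring, show R+2-1 = R+1 by ring, gg_right le_rfl, gg_p1, gg_p2,
      show R+3-6 = R-3 by ring]
    simp
  · subst h
    rw [show R+3+1 = R+4 by ring, show R+3-1 = R+2 by ring, gg_right (by omega),
      gg_p2, gg_right le_rfl, add_zero, abs_neg, abs_neg,
      abs_of_nonneg (zp_nonneg _), abs_of_nonneg (zp_nonneg _)]
    exact zp_le4 (by omega)
  · rw [gg_right (by omega : R+3 ≤ s+1), gg_right (by omega : R+3 ≤ s-1), gg_right (by omega),
      ← neg_add, abs_neg, abs_neg,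
      abs_of_nonneg (add_nonneg (zp_nonneg _) (zp_nonneg _)), abs_of_nonneg (zp_nonneg _)]
    have h1 : zp (-(s+1-6)) ≤ 2 * zp (-(s-6)) := zp_le2 (by omega)
    have h2 : zp (-(s-1-6)) ≤ 2 * zp (-(s-6)) := zp_le2 (by omega)
    linarith

lemma hh_sum {R : ℤ} (hR : 5 ≤ R) (t : ℤ) : |HH R t| ≤ 4 * |hh R t| := by
  unfold HH
  have hcase : -R + 3 ≤ t ∨ t = -R+2 ∨ t = -R+1 ∨ t = -R ∨ t = -R-1 ∨ t = -R-2 ∨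
      t ≤ -R-3 := by omega
  rcases hcase with h|h|h|h|h|h|h
  · rw [hh_right (by omega : -R+2 ≤ t+1), hh_right (by omega : -R+2 ≤ t-1), hh_right (by omega)]
    have h1 : zp (-|t+1|) ≤ 2 * zp (-|t|) := zp_le2 (by simp only [Int.abs_eq_natAbs]; omega)
    have h2 : zp (-|t-1|) ≤ 2 * zp (-|t|) := zp_le2 (by simp only [Int.abs_eq_natAbs]; omega)
    rw [abs_of_nonneg (add_nonneg (zp_nonneg _) (zp_nonneg _)), abs_of_nonneg (zp_nonneg _)]
    linarith
  · subst h
    rw [show -R+2+1 = -R+3 by ring, show -R+2-1 = -R+1 by ring, hh_right (by omega), hh_p1,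
      hh_right le_rfl, add_zero,
      abs_of_nonneg (zp_nonneg _), abs_of_nonneg (zp_nonneg _)]
    exact zp_le4 (by simp only [Int.abs_eq_natAbs]; omega)
  · subst h
    rw [show -R+1+1 = -R+2 by ring, show -R+1-1 = -R by ring, hh_right le_rfl, hh_0, hh_p1,
      show |(-R+2)| = R-2 by rw [show -R+2 = -(R-2) by ring, abs_neg]; exact abs_of_nonneg (by omega)]
    simp
  · subst h
    rw [hh_p1, hh_m1]
    simp
  · subst h
    rw [show -R-1+1 = -R by ring, show -R-1-1 = -R-2 by ring, hh_0, hh_left le_rfl,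
      show -R-2+4 = -(R-2) by ring, hh_m1]
    simp
  · subst h
    rw [show -R-2+1 = -R-1 by ring, show -R-2-1 = -R-3 by ring, hh_m1, hh_left (by omega),
      hh_left le_rfl, zero_add,
      abs_of_nonneg (zp_nonneg _), abs_of_nonneg (zp_nonneg _)]
    exact zp_le4 (by omega)
  · rw [hh_left (by omega : t+1 ≤ -R-2), hh_left (by omega : t-1 ≤ -R-2), hh_left (by omega),
      abs_of_nonneg (add_nonneg (zp_nonneg _) (zp_nonneg _)), abs_of_nonneg (zp_nonneg _)]
    have h1 : zp (t+1+4) ≤ 2 * zp (t+4) := zp_le2 (by omega)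
    have h2 : zp (t-1+4) ≤ 2 * zp (t+4) := zp_le2 (by omega)
    linarith

lemma gg_bound {R : ℤ} (hR : 5 ≤ R) (s : ℤ) : |gg R s| ≤ 64 * zp (-|s|) := by
  have hcase : s ≤ R - 3 ∨ s = R-2 ∨ s = R-1 ∨ s = R ∨ s = R+1 ∨ s = R+2 ∨ R+3 ≤ s := by omega
  rcases hcase with h|h|h|h|h|h|h
  · rw [gg_left h, abs_of_nonneg (zp_nonneg _)]
    have := zp_pos (-|s|); linarith
  · subst h; rw [gg_m2, abs_zero]; exact mul_nonneg (by norm_num) (zp_nonneg _)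
  · subst h
    rw [gg_m1, abs_neg, abs_of_nonneg (zp_nonneg _)]
    exact zp_le64 (by simp only [Int.abs_eq_natAbs]; omega)
  · subst h; rw [gg_R, abs_zero]; exact mul_nonneg (by norm_num) (zp_nonneg _)
  · subst h
    rw [gg_p1, abs_of_nonneg (zp_nonneg _)]
    exact zp_le64 (by simp only [Int.abs_eq_natAbs]; omega)
  · subst h; rw [gg_p2, abs_zero]; exact mul_nonneg (by norm_num) (zp_nonneg _)
  · rw [gg_right h, abs_neg, abs_of_nonneg (zp_nonneg _)]
    exact zp_le64 (by simp only [Int.abs_eq_natAbs]; omega)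

lemma hh_bound {R : ℤ} (hR : 5 ≤ R) (t : ℤ) : |hh R t| ≤ 64 * zp (-|t|) := by
  have hcase : -R+2 ≤ t ∨ t = -R+1 ∨ t = -R ∨ t = -R-1 ∨ t ≤ -R-2 := by omega
  rcases hcase with h|h|h|h|h
  · rw [hh_right h, abs_of_nonneg (zp_nonneg _)]
    have := zp_pos (-|t|); linarith
  · subst h; rw [hh_p1, abs_zero]; exact mul_nonneg (by norm_num) (zp_nonneg _)
  · subst h
    rw [hh_0, abs_neg, abs_of_nonneg (zp_nonneg _)]
    exact zp_le64 (by simp only [Int.abs_eq_natAbs]; omega)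
  · subst h; rw [hh_m1, abs_zero]; exact mul_nonneg (by norm_num) (zp_nonneg _)
  · rw [hh_left h, abs_of_nonneg (zp_nonneg _)]
    exact zp_le64 (by simp only [Int.abs_eq_natAbs]; omega)

lemma gg_zero_GG {R s : ℤ} (hR : 5 ≤ R) (h : gg R s = 0) : GG R s = 0 := by
  have hs := gg_sum hR s
  rw [h] at hs
  simp only [abs_zero, mul_zero] at hs
  exact abs_nonpos_iff.mp hs

lemma hh_zero_HH {R t : ℤ} (hR : 5 ≤ R) (h : hh R t = 0) : HH R t = 0 := by
  have ht := hh_sum hR t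
  rw [h] at ht
  simp only [abs_zero, mul_zero] at ht
  exact abs_nonpos_iff.mp ht

/-- The function `u`. -/
noncomputable def uFun (R : ℤ) (j : ℤ × ℤ) : ℝ := gg R (j.1 + j.2) * hh R (j.1 - j.2)

/-- The potential `V`. -/
noncomputable def VFun (R : ℤ) (j : ℤ × ℤ) : ℝ :=
  if uFun R j = 0 then 0 else 4 - (GG R (j.1+j.2) * HH R (j.1-j.2)) / uFun R j

lemma lap_eq (R : ℤ) (j : ℤ × ℤ) :
    discreteLap2 (uFun R) j = GG R (j.1+j.2) * HH R (j.1-j.2) - 4 * uFun R j := by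
  simp only [discreteLap2, uFun, GG, HH]
  rw [show j.1+1+j.2 = j.1+j.2+1 by ring, show j.1+1-j.2 = j.1-j.2+1 by ring,
    show j.1-1+j.2 = j.1+j.2-1 by ring, show j.1-1-j.2 = j.1-j.2-1 by ring,
    show j.1+(j.2+1) = j.1+j.2+1 by ring, show j.1-(j.2+1) = j.1-j.2-1 by ring,
    show j.1+(j.2-1) = j.1+j.2-1 by ring, show j.1-(j.2-1) = j.1-j.2+1 by ring]
  ring

lemma pde {R : ℤ} (hR : 5 ≤ R) (j : ℤ × ℤ) :
    discreteLap2 (uFun R) j + VFun R j * uFun R j = 0 := by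
  rw [lap_eq]
  by_cases h : uFun R j = 0
  · rw [VFun, if_pos h, h]
    simp only [mul_zero, zero_mul, sub_zero, add_zero]
    rcases mul_eq_zero.mp h with hg | hh0
    · rw [gg_zero_GG hR hg, zero_mul]
    · rw [hh_zero_HH hR hh0, mul_zero]
  · rw [VFun, if_neg h]
    field_simp
    ring

lemma vbound {R : ℤ} (hR : 5 ≤ R) (j : ℤ × ℤ) : |VFun R j| ≤ 20 := by
  rw [VFun]
  by_cases h : uFun R j = 0
  · rw [if_pos h]; norm_num
  · rw [if_neg h]
    have hu : |uFun R j| = |gg R (j.1+j.2)| * |hh R (j.1-j.2)| := by rw [uFun, abs_mul]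
    have hG := gg_sum hR (j.1+j.2)
    have hH := hh_sum hR (j.1-j.2)
    have h16 : |GG R (j.1+j.2) * HH R (j.1-j.2)| ≤ 16 * |uFun R j| := by
      rw [abs_mul, hu]
      calc |GG R (j.1+j.2)| * |HH R (j.1-j.2)|
          ≤ (4 * |gg R (j.1+j.2)|) * (4 * |hh R (j.1-j.2)|) :=
            mul_le_mul hG hH (abs_nonneg _) (by positivity)
        _ = 16 * (|gg R (j.1+j.2)| * |hh R (j.1-j.2)|) := by ring
    have hdiv : |GG R (j.1+j.2) * HH R (j.1-j.2) / uFun R j| ≤ 16 := by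
      rw [abs_div, div_le_iff₀ (abs_pos.mpr h)]
      linarith
    calc |4 - GG R (j.1+j.2) * HH R (j.1-j.2) / uFun R j|
        ≤ |(4:ℝ)| + |GG R (j.1+j.2) * HH R (j.1-j.2) / uFun R j| := abs_sub _ _
      _ ≤ 4 + 16 := by rw [abs_of_nonneg (by norm_num : (0:ℝ) ≤ 4)]; linarith
      _ = 20 := by norm_num

lemma usummable {R : ℤ} (hR : 5 ≤ R) : Summable (fun j : ℤ × ℤ => (uFun R j)^2) := by
  have maj : Summable (fun j : ℤ × ℤ =>
      (4096:ℝ)^2 * (zp (2 * -|j.1|) * zp (2 * -|j.2|))) :=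
    (sumzp.mul_of_nonneg sumzp (fun n => zp_nonneg _) (fun n => zp_nonneg _)).mul_left _
  refine Summable.of_nonneg_of_le (fun j => sq_nonneg _) (fun j => ?_) maj
  have h1 : |uFun R j| ≤ 4096 * (zp (-|j.1|) * zp (-|j.2|)) := by
    rw [uFun, abs_mul]
    have hg := gg_bound hR (j.1+j.2)
    have hhb := hh_bound hR (j.1-j.2)
    calc |gg R (j.1+j.2)| * |hh R (j.1-j.2)|
        ≤ (64 * zp (-|j.1+j.2|)) * (64 * zp (-|j.1-j.2|)) :=
          mul_le_mul hg hhb (abs_nonneg _) (mul_nonneg (by norm_num) (zp_nonneg _))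
      _ = 4096 * (zp (-|j.1+j.2|) * zp (-|j.1-j.2|)) := by ring
      _ ≤ 4096 * (zp (-|j.1|) * zp (-|j.2|)) := by
          have e1 : zp (-|j.1+j.2|) * zp (-|j.1-j.2|) = zp (-|j.1+j.2| + -|j.1-j.2|) := by
            rw [zp, zp, zp, ← zpow_add₀ (two_ne_zero : (2:ℝ) ≠ 0)]
          have e2 : zp (-|j.1|) * zp (-|j.2|) = zp (-|j.1| + -|j.2|) := by
            rw [zp, zp, zp, ← zpow_add₀ (two_ne_zero : (2:ℝ) ≠ 0)]
          rw [e1, e2]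
          exact mul_le_mul_of_nonneg_left
            (zp_mono (by simp only [Int.abs_eq_natAbs]; omega)) (by norm_num)
  calc (uFun R j)^2 = |uFun R j|^2 := (sq_abs _).symm
    _ ≤ (4096 * (zp (-|j.1|) * zp (-|j.2|)))^2 := pow_le_pow_left₀ (abs_nonneg _) h1 2
    _ = (4096:ℝ)^2 * (zp (2 * -|j.1|) * zp (2 * -|j.2|)) := by
        rw [mul_pow, mul_pow, zp_sq, zp_sq]

lemma u00 {R : ℤ} (hR : 5 ≤ R) : uFun R (0, 0) = 1 := by
  have : uFun R (0, 0) = gg R 0 * hh R 0 := by simp [uFun]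
  rw [this, gg_left (by omega), hh_right (by omega)]
  norm_num [zp]

lemma uvanish {R : ℤ} (hR : 5 ≤ R) (j : ℤ × ℤ) (h : |j.1| + |j.2 - R| ≤ 2) :
    uFun R j = 0 := by
  have hd : j.1+j.2 = R - 2 ∨ j.1+j.2 = R ∨ j.1+j.2 = R + 2 ∨ j.1-j.2 = -R+1 ∨
      j.1-j.2 = -R-1 := by
    simp only [Int.abs_eq_natAbs] at h; omega
  rw [uFun]
  rcases hd with h|h|h|h|h
  · rw [h, gg_m2, zero_mul]
  · rw [h, gg_R, zero_mul]
  · rw [h, gg_p2, zero_mul]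
  · rw [h, hh_p1, mul_zero]
  · rw [h, hh_m1, mul_zero]

/-- **A nonzero `ℓ²` solution of a discrete Schrödinger equation with bounded potential can
vanish on a ball of fixed radius centered at distance `R` from the origin.**
There is a constant `C > 0` such that for every sufficiently large integer `R` there are
`u ∈ ℓ²(ℤ²)` and a potential `V` with `Δ_d u + V u = 0`, `sup |V| ≤ C` (independently of `R`),
`u(0,0) = 1`, and `u(j₁,j₂) = 0` whenever `|j₁| + |j₂ - R| ≤ 2`. -/
theorem discrete_counterexample :
    ∃ C : ℝ, 0 < C ∧ ∃ R₁ : ℕ, ∀ R : ℕ, R₁ ≤ R →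
      ∃ u V : ℤ × ℤ → ℝ,
        Summable (fun j => (u j) ^ 2) ∧
        (∀ j : ℤ × ℤ, discreteLap2 u j + V j * u j = 0) ∧
        (∀ j : ℤ × ℤ, |V j| ≤ C) ∧
        u (0, 0) = 1 ∧
        (∀ j : ℤ × ℤ, |j.1| + |j.2 - (R : ℤ)| ≤ 2 → u j = 0) := by
  refine ⟨20, by norm_num, 5, fun R hR => ?_⟩
  have hS : (5:ℤ) ≤ (R:ℤ) := by exact_mod_cast hR
  exact ⟨uFun (R:ℤ), VFun (R:ℤ), usummable hS, pde hS, vbound hS, u00 hS,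
    fun j hj => uvanish hS j hj⟩
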